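/- arXiv:2306.10842 — 2 statements merged into one kernel-verified Lean document; each statement's English description precedes it below -/
import Mathlib

section
/- Let K be a fractal square of order n with digit set D. For every α ∈ A = {−1,0,1}², the face K_α = K ∩ P_α satisfies the self-similar equation K_α = (K_α + D_α)/n, where D_α = D ∩ ((n−1)·P_α). -/
open Set Pointwise

noncomputable section

/-- The canonical embedding of `ℤ × ℤ` into `ℝ × ℝ`. -/
def coeZ2 (d : ℤ × ℤ) : ℝ × ℝ := ((d.1 : ℝ), (d.2 : ℝ))

/-- The contraction similarity `x ↦ (x + d) / n` of the plane. -/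
def pieceMap (n : ℕ) (d : ℤ × ℤ) (x : ℝ × ℝ) : ℝ × ℝ := (n : ℝ)⁻¹ • (x + coeZ2 d)

/-- `K` is a fractal square of order `n` with digit set `D ⊆ {0,…,n-1}²`,
`1 < |D| < n²`: a nonempty compact set with `K = (K + D)/n`. -/
def IsFractalSquare (n : ℕ) (D : Set (ℤ × ℤ)) (K : Set (ℝ × ℝ)) : Prop :=
  2 ≤ n ∧ D ⊆ Set.Icc (0, 0) ((n : ℤ) - 1, (n : ℤ) - 1) ∧
  1 < Nat.card D ∧ Nat.card D < n ^ 2 ∧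
  K.Nonempty ∧ IsCompact K ∧
  K = ⋃ d ∈ D, pieceMap n d '' K

/-- A dendrite: a nonempty compact, connected, locally connected (planar) set
containing no subset homeomorphic to the circle. -/
def IsDendrite (K : Set (ℝ × ℝ)) : Prop :=
  K.Nonempty ∧ IsCompact K ∧ IsConnected K ∧ LocallyConnectedSpace K ∧
  ¬ ∃ S : Set (ℝ × ℝ), S ⊆ K ∧ Nonempty (S ≃ₜ Circle)

/-- The unit square `P = [0,1]²`. -/
def unitSq : Set (ℝ × ℝ) := Set.Icc (0, 0) (1, 1)

/-- The face `P_α = P ∩ (P + α)` of the unit square. -/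
def faceP (α : ℤ × ℤ) : Set (ℝ × ℝ) := unitSq ∩ ((· + coeZ2 α) '' unitSq)

/-- The face digit set `D_α = D ∩ ((n-1)·P_α)`. -/
def faceD (n : ℕ) (D : Set (ℤ × ℤ)) (α : ℤ × ℤ) : Set (ℤ × ℤ) :=
  {d ∈ D | coeZ2 d ∈ ((n : ℝ) - 1) • faceP α}

lemma mem_unitSq' {x : ℝ × ℝ} : x ∈ unitSq ↔ 0 ≤ x.1 ∧ x.1 ≤ 1 ∧ 0 ≤ x.2 ∧ x.2 ≤ 1 := by
  simp [unitSq, Set.mem_Icc, Prod.le_def]; tauto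

lemma mem_faceP' {α : ℤ × ℤ} {x : ℝ × ℝ} : x ∈ faceP α ↔
    (0 ≤ x.1 ∧ x.1 ≤ 1 ∧ (α.1:ℝ) ≤ x.1 ∧ x.1 ≤ 1 + α.1) ∧
    (0 ≤ x.2 ∧ x.2 ≤ 1 ∧ (α.2:ℝ) ≤ x.2 ∧ x.2 ≤ 1 + α.2) := by
  constructor
  · rintro ⟨h1, w, hw, rfl⟩
    rw [mem_unitSq'] at h1 hw
    simp only [coeZ2, Prod.fst_add, Prod.snd_add] at *
    obtain ⟨a1, a2, a3, a4⟩ := h1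
    obtain ⟨b1, b2, b3, b4⟩ := hw
    exact ⟨⟨a1, a2, by linarith, by linarith⟩, a3, a4, by linarith, by linarith⟩
  · rintro ⟨⟨h1, h2, h3, h4⟩, ⟨h5, h6, h7, h8⟩⟩
    refine ⟨mem_unitSq'.2 ⟨h1, h2, h5, h6⟩, x - coeZ2 α, mem_unitSq'.2 ?_, by simp⟩
    simp only [coeZ2, Prod.fst_sub, Prod.snd_sub]
    refine ⟨by linarith, by linarith, by linarith, by linarith⟩

lemma piece_fst (n : ℕ) (d : ℤ × ℤ) (x : ℝ × ℝ) : (pieceMap n d x).1 = (x.1 + d.1) / (n:ℝ) := by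
  simp [pieceMap, coeZ2, Prod.smul_def, div_eq_inv_mul]; ring

lemma piece_snd (n : ℕ) (d : ℤ × ℤ) (x : ℝ × ℝ) : (pieceMap n d x).2 = (x.2 + d.2) / (n:ℝ) := by
  simp [pieceMap, coeZ2, Prod.smul_def, div_eq_inv_mul]; ring

lemma mem_smul_faceP' {n : ℕ} (hn : 2 ≤ n) {α : ℤ × ℤ} {d : ℤ × ℤ} :
    coeZ2 d ∈ ((n : ℝ) - 1) • faceP α ↔
    (0 ≤ (d.1:ℝ)/((n:ℝ)-1) ∧ (d.1:ℝ)/((n:ℝ)-1) ≤ 1 ∧ (α.1:ℝ) ≤ (d.1:ℝ)/((n:ℝ)-1) ∧ (d.1:ℝ)/((n:ℝ)-1) ≤ 1 + α.1) ∧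
    (0 ≤ (d.2:ℝ)/((n:ℝ)-1) ∧ (d.2:ℝ)/((n:ℝ)-1) ≤ 1 ∧ (α.2:ℝ) ≤ (d.2:ℝ)/((n:ℝ)-1) ∧ (d.2:ℝ)/((n:ℝ)-1) ≤ 1 + α.2) := by
  have hc : ((n:ℝ) - 1) ≠ 0 := by
    have : (2:ℝ) ≤ n := by exact_mod_cast hn
    linarith
  rw [Set.mem_smul_set_iff_inv_smul_mem₀ hc, mem_faceP']
  simp [coeZ2, Prod.smul_def, div_eq_inv_mul]

lemma digit_bounds {n : ℕ} {D : Set (ℤ × ℤ)} (hD : D ⊆ Set.Icc (0, 0) ((n : ℤ) - 1, (n : ℤ) - 1))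
    {d : ℤ × ℤ} (hd : d ∈ D) :
    (0:ℝ) ≤ d.1 ∧ (d.1:ℝ) ≤ (n:ℝ) - 1 ∧ (0:ℝ) ≤ d.2 ∧ (d.2:ℝ) ≤ (n:ℝ) - 1 := by
  have h := hD hd
  rw [Set.mem_Icc, Prod.le_def, Prod.le_def] at h
  obtain ⟨⟨h1, h2⟩, h3, h4⟩ := h
  constructor; · exact_mod_cast h1
  constructor; · exact_mod_cast h3
  constructor; · exact_mod_cast h2
  exact_mod_cast h4

lemma fs_subset_unitSq {n : ℕ} {D : Set (ℤ × ℤ)} {K : Set (ℝ × ℝ)}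
    (hK : IsFractalSquare n D K) : K ⊆ unitSq := by
  obtain ⟨hn, hD, -, -, hne, hcomp, heq⟩ := hK
  have hn2 : (2:ℝ) ≤ n := by exact_mod_cast hn
  have key : ∀ f : ℝ × ℝ → ℝ, Continuous f → (∀ u v : ℝ × ℝ, f (u + v) = f u + f v) →
      (∀ c : ℝ, ∀ u : ℝ × ℝ, f (c • u) = c * f u) →
      (∀ d ∈ D, 0 ≤ f (coeZ2 d) ∧ f (coeZ2 d) ≤ (n:ℝ) - 1) →
      ∀ x ∈ K, 0 ≤ f x ∧ f x ≤ 1 := by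
    intro f hf hadd hsmul hfd
    have hub : ∀ x ∈ K, f x ≤ 1 := by
      obtain ⟨z, hzK, hz⟩ := hcomp.exists_isMaxOn hne hf.continuousOn
      have hz' : z ∈ ⋃ d ∈ D, pieceMap n d '' K := by rw [← heq]; exact hzK
      simp only [Set.mem_iUnion, Set.mem_image, exists_prop] at hz'
      obtain ⟨d, hd, y, hyK, hxy⟩ := hz'
      have h1 : f z = (n:ℝ)⁻¹ * (f y + f (coeZ2 d)) := by
        rw [← hxy, pieceMap, hsmul, hadd]
      have h2 : f y ≤ f z := hz hyK
      have h3 := (hfd d hd).2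
      have hz1 : f z ≤ 1 := by
        have hnpos : (0:ℝ) < n := by linarith
        have : (n:ℝ) * f z = f y + f (coeZ2 d) := by
          rw [h1]; field_simp
        nlinarith
      intro x hx; exact le_trans (hz hx) hz1
    intro x hx
    refine ⟨?_, hub x hx⟩
    obtain ⟨z, hzK, hz⟩ := hcomp.exists_isMinOn hne hf.continuousOn
    have hz' : z ∈ ⋃ d ∈ D, pieceMap n d '' K := by rw [← heq]; exact hzK
    simp only [Set.mem_iUnion, Set.mem_image, exists_prop] at hz'
    obtain ⟨d, hd, y, hyK, hxy⟩ := hz'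
    have h1 : f z = (n:ℝ)⁻¹ * (f y + f (coeZ2 d)) := by
      rw [← hxy, pieceMap, hsmul, hadd]
    have h2 : f z ≤ f y := hz hyK
    have h3 := (hfd d hd).1
    have hz0 : 0 ≤ f z := by
      have hnpos : (0:ℝ) < n := by linarith
      have : (n:ℝ) * f z = f y + f (coeZ2 d) := by rw [h1]; field_simp
      nlinarith
    exact le_trans hz0 (hz hx)
  intro x hx
  have k1 := key Prod.fst continuous_fst (fun u v => rfl) (fun c u => rfl)
    (fun d hd => ⟨(digit_bounds hD hd).1, (digit_bounds hD hd).2.1⟩) x hx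
  have k2 := key Prod.snd continuous_snd (fun u v => rfl) (fun c u => rfl)
    (fun d hd => ⟨(digit_bounds hD hd).2.2.1, (digit_bounds hD hd).2.2.2⟩) x hx
  exact mem_unitSq'.2 ⟨k1.1, k1.2, k2.1, k2.2⟩

lemma coord_fwd {n : ℕ} (hn : 2 ≤ n) {a : ℤ} (ha : a = -1 ∨ a = 0 ∨ a = 1) {d : ℤ} {y : ℝ}
    (hd0 : (0:ℝ) ≤ (d:ℝ)) (hd1 : (d:ℝ) ≤ (n:ℝ) - 1) (hy0 : 0 ≤ y) (hy1 : y ≤ 1)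
    (hx1 : (a:ℝ) ≤ (y + d) / n) (hx2 : (y + d) / n ≤ 1 + (a:ℝ)) :
    ((a:ℝ) ≤ y ∧ y ≤ 1 + a) ∧
    (0 ≤ (d:ℝ)/((n:ℝ)-1) ∧ (d:ℝ)/((n:ℝ)-1) ≤ 1 ∧
     (a:ℝ) ≤ (d:ℝ)/((n:ℝ)-1) ∧ (d:ℝ)/((n:ℝ)-1) ≤ 1 + a) := by
  have hn2 : (2:ℝ) ≤ n := by exact_mod_cast hn
  have hnpos : (0:ℝ) < n := by linarith
  have hcpos : (0:ℝ) < (n:ℝ) - 1 := by linarith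
  have hs0 : 0 ≤ (d:ℝ)/((n:ℝ)-1) := div_nonneg hd0 hcpos.le
  have hs1 : (d:ℝ)/((n:ℝ)-1) ≤ 1 := by rw [div_le_one hcpos]; linarith
  rw [le_div_iff₀ hnpos] at hx1
  rw [div_le_iff₀ hnpos] at hx2
  rcases ha with rfl | rfl | rfl
  · push_cast at *
    have hy : y ≤ 0 := by nlinarith
    have hd : (d:ℝ) ≤ 0 := by nlinarith
    refine ⟨⟨by linarith, by linarith⟩, hs0, hs1, ?_, ?_⟩
    · rw [le_div_iff₀ hcpos]; nlinarith
    · rw [div_le_iff₀ hcpos]; nlinarith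
  · push_cast at *
    exact ⟨⟨hy0, by linarith⟩, hs0, hs1, by linarith, by linarith⟩
  · push_cast at *
    have hy : 1 ≤ y := by nlinarith
    have hd : (n:ℝ) - 1 ≤ (d:ℝ) := by nlinarith
    refine ⟨⟨hy, by linarith⟩, hs0, hs1, ?_, by linarith⟩
    rw [le_div_iff₀ hcpos]; nlinarith

lemma coord_bwd {n : ℕ} (hn : 2 ≤ n) {a : ℤ} {d : ℤ} {y : ℝ}
    (hy0 : 0 ≤ y) (hy1 : y ≤ 1) (hya : (a:ℝ) ≤ y) (hya' : y ≤ 1 + a)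
    (hs0 : 0 ≤ (d:ℝ)/((n:ℝ)-1)) (hs1 : (d:ℝ)/((n:ℝ)-1) ≤ 1)
    (hsa : (a:ℝ) ≤ (d:ℝ)/((n:ℝ)-1)) (hsa' : (d:ℝ)/((n:ℝ)-1) ≤ 1 + a) :
    0 ≤ (y + d)/n ∧ (y + d)/n ≤ 1 ∧ (a:ℝ) ≤ (y + d)/n ∧ (y + d)/n ≤ 1 + a := by
  have hn2 : (2:ℝ) ≤ n := by exact_mod_cast hn
  have hnpos : (0:ℝ) < n := by linarith
  have hcpos : (0:ℝ) < (n:ℝ) - 1 := by linarith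
  rw [le_div_iff₀ hcpos] at hs0 hsa
  rw [div_le_iff₀ hcpos] at hs1 hsa'
  refine ⟨?_, ?_, ?_, ?_⟩
  · apply div_nonneg _ hnpos.le; nlinarith
  · rw [div_le_one hnpos]; linarith
  · rw [le_div_iff₀ hnpos]; nlinarith
  · rw [div_le_iff₀ hnpos]; nlinarith

/-- For every `α ∈ A = {-1,0,1}²`, the face `K_α = K ∩ P_α` of a
fractal square satisfies the self-similar equation `K_α = (K_α + D_α)/n`. -/
theorem fractalSquare_face_selfSimilar
    (n : ℕ) (D : Set (ℤ × ℤ)) (K : Set (ℝ × ℝ))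
    (hK : IsFractalSquare n D K)
    (α : ℤ × ℤ) (hα : α ∈ ({-1, 0, 1} ×ˢ {-1, 0, 1} : Set (ℤ × ℤ))) :
    K ∩ faceP α = ⋃ d ∈ faceD n D α, pieceMap n d '' (K ∩ faceP α) := by
  have hKsub := fs_subset_unitSq hK
  obtain ⟨hn, hD, -, -, hne, hcomp, heq⟩ := hK
  rw [Set.mem_prod] at hα
  obtain ⟨hα1, hα2⟩ := hα
  simp only [Set.mem_insert_iff, Set.mem_singleton_iff] at hα1 hα2
  ext x
  simp only [Set.mem_inter_iff, Set.mem_iUnion, Set.mem_image, exists_prop]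
  constructor
  · rintro ⟨hxK, hxF⟩
    have hx' : x ∈ ⋃ d ∈ D, pieceMap n d '' K := by rw [← heq]; exact hxK
    simp only [Set.mem_iUnion, Set.mem_image, exists_prop] at hx'
    obtain ⟨d, hdD, y, hyK, hxy⟩ := hx'
    obtain ⟨hd1, hd2, hd3, hd4⟩ := digit_bounds hD hdD
    have hyU := mem_unitSq'.1 (hKsub hyK)
    obtain ⟨hy1, hy2, hy3, hy4⟩ := hyU
    rw [mem_faceP'] at hxF
    obtain ⟨⟨-, -, hf1, hf2⟩, -, -, hf3, hf4⟩ := hxF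
    rw [← hxy, piece_fst] at hf1 hf2
    rw [← hxy, piece_snd] at hf3 hf4
    have c1 := coord_fwd hn hα1 hd1 hd2 hy1 hy2 hf1 hf2
    have c2 := coord_fwd hn hα2 hd3 hd4 hy3 hy4 hf3 hf4
    have hyF : y ∈ faceP α := mem_faceP'.2 ⟨⟨hy1, hy2, c1.1.1, c1.1.2⟩, hy3, hy4, c2.1.1, c2.1.2⟩
    refine ⟨d, ⟨hdD, (mem_smul_faceP' hn).2 ⟨c1.2, c2.2⟩⟩, y, ⟨hyK, hyF⟩, hxy⟩
  · rintro ⟨d, hdF, y, ⟨hyK, hyF⟩, hxy⟩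
    obtain ⟨hdD, hdS⟩ := hdF
    have hxK : x ∈ K := by
      rw [heq]
      simp only [Set.mem_iUnion, Set.mem_image, exists_prop]
      exact ⟨d, hdD, y, hyK, hxy⟩
    refine ⟨hxK, ?_⟩
    rw [mem_faceP'] at hyF
    obtain ⟨⟨hy1, hy2, hya1, hya2⟩, hy3, hy4, hya3, hya4⟩ := hyF
    have hdS' := (mem_smul_faceP' hn).1 hdS
    obtain ⟨⟨hs1, hs2, hs3, hs4⟩, hs5, hs6, hs7, hs8⟩ := hdS'
    have c1 := coord_bwd hn hy1 hy2 hya1 hya2 hs1 hs2 hs3 hs4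
    have c2 := coord_bwd hn hy3 hy4 hya3 hya4 hs5 hs6 hs7 hs8
    rw [mem_faceP', ← hxy, piece_fst, piece_snd]
    exact ⟨c1, c2⟩
end
end

section
/- Let K₁ and K₂ be fractal segments of order n with digit sets D₁ and D₂. For a ∈ {−1,0,1} set F_a = K₁ ∩ (K₂ + a) and G_a = D₁ ∩ (D₂ − a). If G₀ has exactly one element and (F₁ + G₁) ∪ (F_{−1} + G_{−1}) ≠ ∅, then F₀ = K₁ ∩ K₂ is countably infinite. -/
open Set Pointwise

noncomputable section

/-- `K` is a fractal segment of order `n` with (nonempty) digit set `D ⊆ {0,…,n-1}`: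
a nonempty compact set with `K = (K + D)/n`. -/
def IsFractalSegment (n : ℕ) (D : Set ℤ) (K : Set ℝ) : Prop :=
  2 ≤ n ∧ D.Nonempty ∧ D ⊆ Set.Icc 0 ((n : ℤ) - 1) ∧
  K.Nonempty ∧ IsCompact K ∧
  K = ⋃ d ∈ D, (fun x => (x + (d : ℝ)) / n) '' K

/-- `F_a = K₁ ∩ (K₂ + a)`. -/
def segF (K₁ K₂ : Set ℝ) (a : ℤ) : Set ℝ := K₁ ∩ ((· + (a : ℝ)) '' K₂)

/-- `G_a = D₁ ∩ (D₂ - a)`. -/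
def segG (D₁ D₂ : Set ℤ) (a : ℤ) : Set ℤ := D₁ ∩ ((· - a) '' D₂)

lemma frac_mem_iff {n : ℕ} {D : Set ℤ} {K : Set ℝ}
    (hKeq : K = ⋃ d ∈ D, (fun x => (x + (d : ℝ)) / n) '' K) (x : ℝ) :
    x ∈ K ↔ ∃ d ∈ D, ∃ y ∈ K, (y + (d : ℝ)) / n = x := by
  conv_lhs => rw [hKeq]
  simp [Set.mem_iUnion]

lemma frac_sub_Icc {n : ℕ} {D : Set ℤ} {K : Set ℝ} (h : IsFractalSegment n D K) :
    K ⊆ Set.Icc 0 1 := by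
  obtain ⟨hn, hDne, hDsub, hKne, hKc, hKeq⟩ := h
  have hn2 : (2 : ℝ) ≤ n := by exact_mod_cast hn
  obtain ⟨M, hMmem, hMub⟩ := hKc.exists_isGreatest hKne
  obtain ⟨m, hmmem, hmlb⟩ := hKc.exists_isLeast hKne
  have hM1 : M ≤ 1 := by
    obtain ⟨d, hd, y, hy, hEq⟩ := (frac_mem_iff hKeq M).mp hMmem
    have hd' : (d : ℝ) ≤ (n : ℝ) - 1 := by
      have := (hDsub hd).2
      push_cast
      exact_mod_cast this
    have hy' : y ≤ M := hMub hy
    have hEq' : y + (d : ℝ) = M * n := by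
      field_simp at hEq
      linarith [hEq]
    nlinarith
  have hm0 : 0 ≤ m := by
    obtain ⟨d, hd, y, hy, hEq⟩ := (frac_mem_iff hKeq m).mp hmmem
    have hd' : (0 : ℝ) ≤ (d : ℝ) := by exact_mod_cast (hDsub hd).1
    have hy' : m ≤ y := hmlb hy
    have hEq' : y + (d : ℝ) = m * n := by
      field_simp at hEq
      linarith [hEq]
    nlinarith
  intro x hx
  exact ⟨le_trans hm0 (hmlb hx), le_trans (hMub hx) hM1⟩

/-- If `G₀` is a singleton and `(F₁ + G₁) ∪ (F₋₁ + G₋₁) ≠ ∅`,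
then `F₀ = K₁ ∩ K₂` is countably infinite. -/
theorem fractalSegment_countably_infinite
    (n : ℕ) (D₁ D₂ : Set ℤ) (K₁ K₂ : Set ℝ)
    (h1 : IsFractalSegment n D₁ K₁) (h2 : IsFractalSegment n D₂ K₂)
    (hG0 : ∃ d₀ : ℤ, segG D₁ D₂ 0 = {d₀})
    (hne : ((segF K₁ K₂ 1 + (fun g : ℤ => (g : ℝ)) '' segG D₁ D₂ 1) ∪
      (segF K₁ K₂ (-1) + (fun g : ℤ => (g : ℝ)) '' segG D₁ D₂ (-1))).Nonempty) :
    (K₁ ∩ K₂).Countable ∧ (K₁ ∩ K₂).Infinite := by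
  obtain ⟨d₀, hG0⟩ := hG0
  have hK₁01 : K₁ ⊆ Set.Icc 0 1 := frac_sub_Icc h1
  have hK₂01 : K₂ ⊆ Set.Icc 0 1 := frac_sub_Icc h2
  obtain ⟨hn, hD₁ne, hD₁sub, hK₁ne, hK₁c, hK₁eq⟩ := h1
  obtain ⟨-, hD₂ne, hD₂sub, hK₂ne, hK₂c, hK₂eq⟩ := h2
  have hn2 : (2 : ℝ) ≤ n := by exact_mod_cast hn
  have hn0 : (n : ℝ) ≠ 0 := by linarith
  have hn1 : (n : ℝ) - 1 ≠ 0 := by linarith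
  have hn1pos : (0 : ℝ) < (n : ℝ) - 1 := by linarith
  -- basic facts about d₀
  have hd₀mem : d₀ ∈ segG D₁ D₂ 0 := by rw [hG0]; rfl
  have hd₀D₁ : d₀ ∈ D₁ := hd₀mem.1
  have hd₀D₂ : d₀ ∈ D₂ := by
    obtain ⟨d₂, hd₂, he⟩ := hd₀mem.2
    have he' : d₂ = d₀ := by simpa using he
    exact he' ▸ hd₂
  have huniq : ∀ d, d ∈ D₁ → d ∈ D₂ → d = d₀ := by
    intro d hd1 hd2
    have : d ∈ segG D₁ D₂ 0 := ⟨hd1, ⟨d, hd2, by simp⟩⟩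
    rw [hG0] at this
    simpa using this
  -- the contraction and its fixed point
  set p : ℝ := (d₀ : ℝ) / ((n : ℝ) - 1) with hp
  set φ : ℝ → ℝ := fun t => (t + (d₀ : ℝ)) / n with hφ
  have hp0 : 0 ≤ p := by
    apply div_nonneg _ (le_of_lt hn1pos)
    exact_mod_cast (hD₁sub hd₀D₁).1
  have hp1 : p ≤ 1 := by
    rw [hp, div_le_one hn1pos]
    have := (hD₁sub hd₀D₁).2
    push_cast
    exact_mod_cast this
  have hφF : ∀ x ∈ K₁ ∩ K₂, φ x ∈ K₁ ∩ K₂ := by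
    intro x hx
    exact ⟨(frac_mem_iff hK₁eq _).mpr ⟨d₀, hd₀D₁, x, hx.1, rfl⟩,
      (frac_mem_iff hK₂eq _).mpr ⟨d₀, hd₀D₂, x, hx.2, rfl⟩⟩
  have hiter : ∀ (k : ℕ) (y : ℝ), φ^[k] y = p + (y - p) / (n : ℝ) ^ k := by
    intro k
    induction k with
    | zero => intro y; simp
    | succ k ih =>
      intro y
      rw [Function.iterate_succ_apply', ih y, hφ, hp]
      have hnk : ((n : ℝ)) ^ k ≠ 0 := pow_ne_zero _ hn0
      field_simp
      ring
  -- a point of K₁ ∩ K₂ different from p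
  have hq : ∃ q, q ∈ K₁ ∩ K₂ ∧ q ≠ p := by
    obtain ⟨x, hx⟩ := hne
    rcases hx with hx | hx
    · -- a = 1 case
      obtain ⟨u, hu, v, hv, hx⟩ := Set.mem_add.mp hx
      obtain ⟨huK₁, w, hwK₂, hwu⟩ := hu
      obtain ⟨g, hg, hgv⟩ := hv
      obtain ⟨hgD₁, d₂, hd₂D₂, hd₂g⟩ := hg
      -- u = 1, w = 0
      have hu1 : u = 1 := by
        have h1 := (hK₁01 huK₁).2
        have h2 := (hK₂01 hwK₂).1
        push_cast at hwu
        linarith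
      have hw0 : w = 0 := by push_cast at hwu; linarith
      have h1K₁ : (1 : ℝ) ∈ K₁ := hu1 ▸ huK₁
      have h0K₂ : (0 : ℝ) ∈ K₂ := hw0 ▸ hwK₂
      have hd₂g' : d₂ - 1 = g := hd₂g
      have hgd : d₂ = g + 1 := by omega
      refine ⟨((1 : ℝ) + (g : ℝ)) / n, ⟨?_, ?_⟩, ?_⟩
      · exact (frac_mem_iff hK₁eq _).mpr ⟨g, hgD₁, 1, h1K₁, rfl⟩
      · refine (frac_mem_iff hK₂eq _).mpr ⟨g + 1, hgd ▸ hd₂D₂, 0, h0K₂, ?_⟩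
        push_cast; ring
      · intro hcon
        rw [hp, div_eq_div_iff hn0 hn1] at hcon
        have hZ : (1 + g) * ((n : ℤ) - 1) = d₀ * n := by exact_mod_cast hcon
        have hkey : (1 + g : ℤ) = n * (1 + g - d₀) := by linear_combination -hZ
        have hg0 : (0 : ℤ) ≤ g := (hD₁sub hgD₁).1
        have hdvd : (n : ℤ) ∣ (1 + g) := ⟨1 + g - d₀, hkey⟩
        have := Int.le_of_dvd (by omega) hdvd
        have hd₂le : d₂ ≤ (n : ℤ) - 1 := (hD₂sub hd₂D₂).2
        omega
    · -- a = -1 case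
      obtain ⟨u, hu, v, hv, hx⟩ := Set.mem_add.mp hx
      obtain ⟨huK₁, w, hwK₂, hwu⟩ := hu
      obtain ⟨g, hg, hgv⟩ := hv
      obtain ⟨hgD₁, d₂, hd₂D₂, hd₂g⟩ := hg
      -- u = 0, w = 1
      have hu0 : u = 0 := by
        have h1 := (hK₁01 huK₁).1
        have h2 := (hK₂01 hwK₂).2
        push_cast at hwu
        linarith
      have hw1 : w = 1 := by push_cast at hwu; linarith
      have h0K₁ : (0 : ℝ) ∈ K₁ := hu0 ▸ huK₁
      have h1K₂ : (1 : ℝ) ∈ K₂ := hw1 ▸ hwK₂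
      have hd₂g' : d₂ - (-1) = g := hd₂g
      have hgd : d₂ = g - 1 := by omega
      refine ⟨(g : ℝ) / n, ⟨?_, ?_⟩, ?_⟩
      · refine (frac_mem_iff hK₁eq _).mpr ⟨g, hgD₁, 0, h0K₁, by push_cast; ring⟩
      · refine (frac_mem_iff hK₂eq _).mpr ⟨g - 1, hgd ▸ hd₂D₂, 1, h1K₂, ?_⟩
        push_cast; ring
      · intro hcon
        rw [hp, div_eq_div_iff hn0 hn1] at hcon
        have hZ : g * ((n : ℤ) - 1) = d₀ * n := by exact_mod_cast hcon
        have hkey : (g : ℤ) = n * (g - d₀) := by linear_combination -hZ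
        have hg1 : (1 : ℤ) ≤ g := by
          have := (hD₂sub hd₂D₂).1; omega
        have hdvd : (n : ℤ) ∣ g := ⟨g - d₀, hkey⟩
        have := Int.le_of_dvd (by omega) hdvd
        have hgle : g ≤ (n : ℤ) - 1 := (hD₁sub hgD₁).2
        omega
  obtain ⟨q, hqF, hqp⟩ := hq
  -- infinitude
  have hInf : (K₁ ∩ K₂).Infinite := by
    have hmem : ∀ k : ℕ, φ^[k] q ∈ K₁ ∩ K₂ := by
      intro k
      induction k with
      | zero => simpa using hqF
      | succ k ih => rw [Function.iterate_succ_apply']; exact hφF _ ih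
    apply Set.infinite_of_injective_forall_mem (f := fun k : ℕ => φ^[k] q) _ hmem
    intro j k hjk
    simp only [hiter] at hjk
    have hqp' : q - p ≠ 0 := sub_ne_zero.mpr hqp
    have hj : ((n : ℝ)) ^ j ≠ 0 := pow_ne_zero _ hn0
    have hk : ((n : ℝ)) ^ k ≠ 0 := pow_ne_zero _ hn0
    have h1 : (q - p) / (n : ℝ) ^ j = (q - p) / (n : ℝ) ^ k := by linarith
    rw [div_eq_div_iff hj hk] at h1
    have h2 : ((n : ℝ)) ^ k = (n : ℝ) ^ j := mul_left_cancel₀ hqp' h1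
    have : (n : ℕ) ^ k = n ^ j := by exact_mod_cast h2
    exact (Nat.pow_right_injective hn this).symm
  refine ⟨?_, hInf⟩
  -- countability
  set S : Set ℝ := ((fun g : ℤ => ((1 : ℝ) + (g : ℝ)) / n) '' D₁) ∪
      ((fun g : ℤ => (g : ℝ) / n) '' D₁) with hS
  have hScount : S.Countable :=
    ((D₁.to_countable).image _).union ((D₁.to_countable).image _)
  have hdec : ∀ x ∈ K₁ ∩ K₂, ((n : ℝ) * x - (d₀ : ℝ)) ∈ K₁ ∩ K₂ ∨ x ∈ S := by
    rintro x ⟨hx₁, hx₂⟩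
    obtain ⟨e₁, he₁, y₁, hy₁, hEq₁⟩ := (frac_mem_iff hK₁eq x).mp hx₁
    obtain ⟨e₂, he₂, y₂, hy₂, hEq₂⟩ := (frac_mem_iff hK₂eq x).mp hx₂
    have hsum : y₁ + (e₁ : ℝ) = y₂ + (e₂ : ℝ) := by
      have : (y₁ + (e₁ : ℝ)) / n = (y₂ + (e₂ : ℝ)) / n := by rw [hEq₁, hEq₂]
      field_simp at this
      linarith
    have hy₁01 := hK₁01 hy₁
    have hy₂01 := hK₂01 hy₂
    have hde1 : ((e₂ - e₁ : ℤ) : ℝ) ≤ 1 := by push_cast; linarith [hy₁01.2, hy₂01.1]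
    have hde2 : (-1 : ℝ) ≤ ((e₂ - e₁ : ℤ) : ℝ) := by push_cast; linarith [hy₁01.1, hy₂01.2]
    have hde1' : (e₂ - e₁ : ℤ) ≤ 1 := by exact_mod_cast hde1
    have hde2' : (-1 : ℤ) ≤ (e₂ - e₁ : ℤ) := by exact_mod_cast hde2
    have htri : e₂ = e₁ - 1 ∨ e₂ = e₁ ∨ e₂ = e₁ + 1 := by omega
    rcases htri with he | he | he
    · -- e₂ = e₁ - 1 : y₁ = 0, x = e₁ / n
      right
      have he' : (e₂ : ℝ) = (e₁ : ℝ) - 1 := by rw [he]; push_cast; ring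
      have hy1 : y₁ = 0 := by
        have h' : y₁ = y₂ - 1 := by linarith
        linarith [hy₁01.1, hy₂01.2]
      refine Or.inr ⟨e₁, he₁, ?_⟩
      show ((e₁ : ℝ)) / n = x
      rw [← hEq₁, hy1]; ring
    · -- e₂ = e₁ : diagonal case
      left
      have hd : e₁ = d₀ := huniq e₁ he₁ (he ▸ he₂)
      have he' : (e₁ : ℝ) = (e₂ : ℝ) := by exact_mod_cast he.symm
      have hy : y₁ = y₂ := by linarith
      have hx' : (n : ℝ) * x - (d₀ : ℝ) = y₁ := by
        rw [← hEq₁, hd]; field_simp; ring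
      rw [hx']
      exact ⟨hy₁, hy ▸ hy₂⟩
    · -- e₂ = e₁ + 1 : y₁ = 1, x = (1 + e₁) / n
      right
      have he' : (e₂ : ℝ) = (e₁ : ℝ) + 1 := by rw [he]; push_cast; ring
      have hy1 : y₁ = 1 := by
        have h' : y₁ = y₂ + 1 := by linarith
        linarith [hy₁01.2, hy₂01.1]
      refine Or.inl ⟨e₁, he₁, ?_⟩
      show ((1 : ℝ) + (e₁ : ℝ)) / n = x
      rw [← hEq₁, hy1]
  -- the countable superset
  have hTc : (insert p (⋃ k : ℕ, φ^[k] '' S)).Countable :=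
    (Set.countable_iUnion (fun k => hScount.image _)).insert p
  refine Set.Countable.mono ?_ hTc
  intro x hx
  by_cases hxU : x ∈ ⋃ k : ℕ, φ^[k] '' S
  · exact Set.mem_insert_iff.mpr (Or.inr hxU)
  · -- x is in every level of the diagonal piece, hence x = p
    have hlevel : ∀ k : ℕ, ∃ y ∈ K₁ ∩ K₂, φ^[k] y = x := by
      intro k
      induction k with
      | zero => exact ⟨x, hx, rfl⟩
      | succ k ih =>
        obtain ⟨y, hyF, hyk⟩ := ih
        rcases hdec y hyF with hy' | hyS
        · refine ⟨(n : ℝ) * y - (d₀ : ℝ), hy', ?_⟩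
          rw [Function.iterate_succ_apply]
          have : φ ((n : ℝ) * y - (d₀ : ℝ)) = y := by
            rw [hφ]; field_simp; ring
          rw [this, hyk]
        · have himg : x ∈ φ^[k] '' S := ⟨y, hyS, hyk⟩
          exact absurd (Set.mem_iUnion.mpr ⟨k, himg⟩) hxU
    have hbound : ∀ k : ℕ, |x - p| ≤ 2 / (n : ℝ) ^ k := by
      intro k
      obtain ⟨y, hyF, hyk⟩ := hlevel k
      have hy01 := hK₁01 hyF.1
      have hyp : |y - p| ≤ 2 := by
        rw [abs_le]; constructor <;> linarith [hy01.1, hy01.2]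
      have hxe : x - p = (y - p) / (n : ℝ) ^ k := by
        rw [← hyk, hiter k y]; ring
      rw [hxe, abs_div, abs_of_pos (by positivity : (0:ℝ) < (n : ℝ) ^ k)]
      gcongr
    have hxp : x = p := by
      by_contra hne'
      have habs : 0 < |x - p| := abs_pos.mpr (sub_ne_zero.mpr hne')
      obtain ⟨k, hk⟩ := pow_unbounded_of_one_lt (2 / |x - p|) (show (1:ℝ) < n by linarith)
      have hnk : (0:ℝ) < (n : ℝ) ^ k := by positivity
      have h2 : 2 < |x - p| * (n : ℝ) ^ k := by
        rw [div_lt_iff₀ habs] at hk; linarith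
      have h3 : |x - p| * (n : ℝ) ^ k ≤ 2 := by
        have := hbound k
        rw [le_div_iff₀ hnk] at this
        linarith
      linarith
    exact Set.mem_insert_iff.mpr (Or.inl hxp)
end
end
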